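/- Let (r_ℓ)_{ℓ≥1} be a sequence of positive real numbers with r_ℓ → ∞ and r_ℓ/ℓ → 0 as ℓ → ∞. Then there exists a constant C > 0, independent of η₂, such that for every η₂ ∈ (0, √2) there exists L ≥ 1 so that for all integers ℓ ≥ L, all integers m with ℓ − 2r_ℓ ≤ m ≤ ℓ − r_ℓ, and all θ ∈ [0, η₂ (r_ℓ/ℓ)^{1/2}], one has 0 ≤ S_{ℓ,m−1}(θ) − S_{ℓ,m}(θ) ≤ C η₂. -/

import Mathlib

open Real Filter

noncomputable def Qlm (ℓ : ℕ) (m : ℤ) (θ : ℝ) : ℝ :=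
  ((m : ℝ) ^ 2 - 1 / 4) / Real.cos θ ^ 2 - 1 / 4 - (ℓ : ℝ) * ((ℓ : ℝ) + 1)

noncomputable def Slm (ℓ : ℕ) (m : ℤ) (θ : ℝ) : ℝ :=
  ∫ t in (0:ℝ)..θ, Real.sqrt |Qlm ℓ m t|

/-- `√a - √b ≤ (a-b)/√b` for `0 < b ≤ a`. -/
lemma sqrt_sub_sqrt_le {a b : ℝ} (hb : 0 < b) (hab : b ≤ a) :
    Real.sqrt a - Real.sqrt b ≤ (a - b) / Real.sqrt b := by
  rw [le_div_iff₀ (Real.sqrt_pos.mpr hb)]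
  nlinarith [Real.sq_sqrt hb.le, Real.sq_sqrt (hb.le.trans hab), Real.sqrt_nonneg a,
    Real.sqrt_nonneg b, Real.sqrt_le_sqrt hab]

/-- FTC evaluation of `∫₀^θ (A - t)^{-1/2} dt`. -/
lemma integral_inv_sqrt_sub {A θ : ℝ} (hθ : 0 ≤ θ) (hθA : θ < A) :
    ∫ t in (0:ℝ)..θ, (Real.sqrt (A - t))⁻¹ =
      2 * Real.sqrt A - 2 * Real.sqrt (A - θ) := by
  have hmem : ∀ t ∈ Set.uIcc (0:ℝ) θ, 0 < A - t := by
    intro t ht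
    rw [Set.uIcc_of_le hθ] at ht
    have := ht.2
    linarith
  have hderiv : ∀ t ∈ Set.uIcc (0:ℝ) θ,
      HasDerivAt (fun u => -2 * Real.sqrt (A - u)) (Real.sqrt (A - t))⁻¹ t := by
    intro t ht
    have hpos := hmem t ht
    have h1 : HasDerivAt (fun u : ℝ => A - u) (-1) t := by
      simpa using (hasDerivAt_id t).const_sub A
    have h2 : HasDerivAt (fun u : ℝ => Real.sqrt (A - u))
        (1 / (2 * Real.sqrt (A - t)) * (-1)) t :=
      (Real.hasDerivAt_sqrt hpos.ne').comp t h1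
    have h3 := h2.const_mul (-2 : ℝ)
    convert h3 using 1
    have hs : Real.sqrt (A - t) ≠ 0 := (Real.sqrt_pos.mpr hpos).ne'
    exacts [rfl, rfl, by ring]
  have hint : IntervalIntegrable (fun t => (Real.sqrt (A - t))⁻¹)
      MeasureTheory.volume 0 θ := by
    apply ContinuousOn.intervalIntegrable
    apply ContinuousOn.inv₀
    · exact (Real.continuous_sqrt.comp (continuous_const.sub continuous_id)).continuousOn
    · intro t ht
      exact (Real.sqrt_pos.mpr (hmem t ht)).ne'
  have := intervalIntegral.integral_eq_sub_of_hasDerivAt hderiv hint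
  rw [this]
  ring

/-- Lower bound for `B = (n(n+1) - m²)/(n(n+1))`. -/
lemma aux_Blow {γ n s mm : ℝ} (hγpos : 0 < γ) (hn1 : 1 ≤ n)
    (hγn : 6 ≤ γ * n) (hs1 : 1 ≤ s) (hsnγ : s ≤ γ / 8 * n)
    (hm1 : 1 ≤ mm) (hm_ub : mm ≤ n - s) :
    (2 - γ / 2) * s * (n + 1) ≤ n * (n + 1) - mm ^ 2 := by
  have hm2 : mm ^ 2 ≤ (n - s) ^ 2 := by nlinarith
  have h1 : s * s ≤ γ / 8 * n * s := by nlinarith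
  have h2 : 2 * s ≤ 3 * γ / 8 * n * s := by nlinarith
  nlinarith

/-- Pointwise bound for the quadratic expression in `Q`. -/
lemma aux_Q {P B mm t c : ℝ} (hP : 0 < P) (hm : 1 ≤ mm)
    (hu : 0 < 1 - t ^ 2) (hc : 1 - t ^ 2 ≤ c)
    (hB : B * P = P - mm ^ 2) (hBt : 0 ≤ B - t ^ 2) :
    (mm ^ 2 - 1 / 4) / c - 1 / 4 - P ≤ -(P * (B - t ^ 2)) := by
  have hc0 : 0 < c := by linarith
  have hdiv : (mm ^ 2 - 1 / 4) / c ≤ mm ^ 2 / (1 - t ^ 2) :=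
    div_le_div₀ (by nlinarith) (by nlinarith) hu hc
  have hdiv2 : mm ^ 2 / (1 - t ^ 2) ≤ P - P * (B - t ^ 2) := by
    rw [div_le_iff₀ hu]
    nlinarith [mul_nonneg (mul_nonneg (sq_nonneg t) hP.le) hBt]
  linarith

/-- Final numeric estimate. -/
lemma aux_final {a b θ η : ℝ} (ha : 0 < a) (hb : 0 ≤ b) (hη : 0 < η)
    (h1 : a ^ 2 - b ^ 2 = θ) (h2 : θ ≤ η * a ^ 2) :
    3 / a * (2 * a - 2 * b) ≤ 6 * η := by
  have hkey : a - b ≤ η * a := by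
    nlinarith [mul_nonneg (mul_nonneg hη.le ha.le) hb]
  rw [div_mul_eq_mul_div, div_le_iff₀ ha]
  nlinarith

/-- cosine bounds on a short interval. -/
lemma aux_cos {t θ : ℝ} (ht0 : 0 ≤ t) (htθ : t ≤ θ) (hθ14 : θ ^ 2 ≤ 1 / 4) :
    1 - t ^ 2 ≤ Real.cos t ^ 2 ∧ (3/4 : ℝ) ≤ Real.cos t ^ 2 ∧ 0 < Real.cos t := by
  have ht2 : t ^ 2 ≤ θ ^ 2 := pow_le_pow_left₀ ht0 htθ 2
  have ht14 : t ^ 2 ≤ 1 / 4 := by linarith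
  have h1 : 1 - t ^ 2 / 2 ≤ Real.cos t := Real.one_sub_sq_div_two_le_cos
  have hcpos : 0 < Real.cos t := by linarith
  have h2 : (1 - t ^ 2 / 2) * (1 - t ^ 2 / 2) ≤ Real.cos t * Real.cos t :=
    mul_self_le_mul_self (by linarith) h1
  have h3 : 1 - t ^ 2 ≤ Real.cos t ^ 2 := by nlinarith [sq_nonneg (t ^ 2)]
  exact ⟨h3, by linarith, hcpos⟩

set_option maxHeartbeats 1000000 in
theorem stmt_8 (r : ℕ → ℝ) (hrpos : ∀ ℓ, 0 < r ℓ)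
    (hrinf : Tendsto r atTop atTop)
    (hr0 : Tendsto (fun ℓ : ℕ => r ℓ / (ℓ : ℝ)) atTop (nhds 0)) :
    ∃ C > (0:ℝ), ∀ η₂ : ℝ, 0 < η₂ → η₂ < Real.sqrt 2 →
      ∃ L : ℕ, 1 ≤ L ∧ ∀ ℓ : ℕ, L ≤ ℓ → ∀ m : ℤ,
        (ℓ : ℝ) - 2 * r ℓ ≤ (m : ℝ) → (m : ℝ) ≤ (ℓ : ℝ) - r ℓ →
        ∀ θ ∈ Set.Icc (0:ℝ) (η₂ * Real.sqrt (r ℓ / (ℓ : ℝ))),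
          0 ≤ Slm ℓ (m - 1) θ - Slm ℓ m θ ∧ Slm ℓ (m - 1) θ - Slm ℓ m θ ≤ C * η₂ := by
  refine ⟨6, by norm_num, ?_⟩
  intro η₂ hη₂ hη₂'
  set γ : ℝ := 2 - η₂ ^ 2 with hγdef
  have hη₂sq : η₂ ^ 2 < 2 := by
    have := (Real.lt_sqrt hη₂.le).mp hη₂'
    simpa using this
  have hγpos : 0 < γ := by simp only [hγdef]; linarith
  have hγ2 : γ ≤ 2 := by
    have := sq_nonneg η₂
    simp only [hγdef]; linarith
  set δ : ℝ := min (1/8 : ℝ) (γ/8) with hδdef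
  have hδpos : 0 < δ := lt_min (by norm_num) (by linarith)
  have E1 : ∀ᶠ ℓ in atTop, r ℓ / (ℓ : ℝ) < δ := hr0.eventually_lt_const hδpos
  have E2 : ∀ᶠ ℓ in atTop, 1 ≤ r ℓ := hrinf.eventually_ge_atTop 1
  have E3 : ∀ᶠ ℓ : ℕ in atTop, max 1 ⌈6/γ⌉₊ ≤ ℓ := eventually_ge_atTop _
  obtain ⟨L', hL'⟩ := eventually_atTop.mp ((E1.and E2).and E3)
  refine ⟨max L' 1, le_max_right _ _, ?_⟩
  intro ℓ hℓ m hm_lb hm_ub θ hθmem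
  obtain ⟨⟨hδℓ, hs1⟩, hN⟩ := hL' ℓ (le_trans (le_max_left _ _) hℓ)
  set n : ℝ := (ℓ : ℝ) with hndef
  set s : ℝ := r ℓ with hsdef
  have hspos : 0 < s := hrpos ℓ
  have hn1 : (1:ℝ) ≤ n := by
    have h : (1:ℕ) ≤ ℓ := le_trans (le_max_left _ _) hN
    rw [hndef]; exact_mod_cast h
  have hn0 : (0:ℝ) < n := by linarith
  have hγn : 6 ≤ γ * n := by
    have h1 : (6/γ : ℝ) ≤ (⌈6/γ⌉₊ : ℝ) := Nat.le_ceil _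
    have h2 : (⌈6/γ⌉₊ : ℝ) ≤ n := by
      have h : ⌈6/γ⌉₊ ≤ ℓ := le_trans (le_max_right _ _) hN
      rw [hndef]; exact_mod_cast h
    have h3 := h1.trans h2
    rw [div_le_iff₀ hγpos] at h3
    linarith
  have hsn8 : s ≤ n / 8 := by
    have h : s / n ≤ 1/8 := le_of_lt (lt_of_lt_of_le hδℓ (min_le_left _ _))
    rw [div_le_iff₀ hn0] at h; linarith
  have hsnγ : s ≤ (γ/8) * n := by
    have h : s / n ≤ γ/8 := le_of_lt (lt_of_lt_of_le hδℓ (min_le_right _ _))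
    rw [div_le_iff₀ hn0] at h; linarith
  -- m is at least 1
  have hm1 : (1:ℝ) ≤ (m:ℝ) := by
    have h0 : (0:ℝ) < (m:ℝ) := by linarith
    have h1 : (0:ℤ) < m := by exact_mod_cast h0
    exact_mod_cast h1
  -- the key quantity B = A²
  set P : ℝ := n * (n + 1) with hPdef
  have hPpos : 0 < P := by rw [hPdef]; exact mul_pos hn0 (by linarith)
  set B : ℝ := (P - (m:ℝ)^2) / P with hBdef
  have hPB : B * P = P - (m:ℝ)^2 := by rw [hBdef]; field_simp
  have hBlow : (2 - γ/2) * (s/n) ≤ B := by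
    have h0 : (2 - γ/2) * s * (n+1) ≤ n * (n+1) - (m:ℝ)^2 :=
      aux_Blow hγpos hn1 hγn hs1 hsnγ hm1 hm_ub
    rw [hBdef, ← mul_div_assoc, div_le_div_iff₀ hn0 hPpos, hPdef]
    nlinarith
  clear_value γ δ P B
  have hsnpos : 0 < s / n := div_pos hspos hn0
  have hBpos : 0 < B :=
    lt_of_lt_of_le (mul_pos (by linarith) hsnpos) hBlow
  -- θ bounds
  obtain ⟨hθ0, hθub⟩ := hθmem
  have hθub' : θ ≤ η₂ * Real.sqrt (s/n) := hθub
  have hθsq : θ^2 ≤ (2 - γ) * (s/n) := by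
    have h1 : θ^2 ≤ (η₂ * Real.sqrt (s/n))^2 := pow_le_pow_left₀ hθ0 hθub' 2
    rw [mul_pow, Real.sq_sqrt hsnpos.le] at h1
    have h2 : η₂^2 = 2 - γ := by rw [hγdef]; ring
    rw [h2] at h1
    exact h1
  have hsnsmall : s/n ≤ 1/8 := by rw [div_le_iff₀ hn0]; linarith
  have hθ14 : θ^2 ≤ 1/4 := by
    have h1 : (2 - γ) * (s/n) ≤ 2 * (s/n) :=
      mul_le_mul_of_nonneg_right (by linarith) hsnpos.le
    linarith
  have hθhalf : θ ≤ 1/2 := by linarith [sq_nonneg (θ - 1/2)]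
  have hBθ : (γ/2) * (s/n) ≤ B - θ^2 := by linarith
  have hBθpos : 0 < B - θ^2 :=
    lt_of_lt_of_le (mul_pos (by linarith) hsnpos) hBθ
  set A : ℝ := Real.sqrt B with hAdef
  have hApos : 0 < A := Real.sqrt_pos.mpr hBpos
  have hA2 : A^2 = B := Real.sq_sqrt hBpos.le
  have hθA : θ < A := Real.lt_sqrt_of_sq_lt (by linarith)
  have hθηA : θ ≤ η₂ * A := by
    have h0 : s/n ≤ B := le_trans (le_mul_of_one_le_left hsnpos.le (by linarith)) hBlow
    have h1 : Real.sqrt (s/n) ≤ A := Real.sqrt_le_sqrt h0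
    exact hθub'.trans (mul_le_mul_of_nonneg_left h1 hη₂.le)
  -- pointwise facts for t ∈ [0, θ]
  have hIcc : Set.uIcc (0:ℝ) θ = Set.Icc 0 θ := Set.uIcc_of_le hθ0
  -- main pointwise bounds on Q
  have hQm_neg : ∀ t ∈ Set.Icc (0:ℝ) θ, n^2 * (A * (A - t)) ≤ -(Qlm ℓ m t) := by
    intro t ht
    obtain ⟨ht0, htθ⟩ := ht
    obtain ⟨hc1, hc2, hc3⟩ := aux_cos ht0 htθ hθ14
    have ht2 : t^2 ≤ θ^2 := pow_le_pow_left₀ ht0 htθ 2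
    have hu : (0:ℝ) < 1 - t^2 := by linarith
    have hBt : 0 ≤ B - t^2 := by linarith
    have hQeq : Qlm ℓ m t = ((m:ℝ)^2 - 1/4) / Real.cos t ^ 2 - 1/4 - P := by
      rw [Qlm, ← hndef, ← hPdef]
    have h3 := aux_Q hPpos hm1 hu hc1 hPB hBt
    have e1 : A * (A - t) ≤ B - t^2 := by
      have htA : 0 ≤ A - t := by linarith
      have hr2 : A^2 - t^2 - A*(A-t) = t*(A-t) := by ring
      linarith [mul_nonneg ht0 htA, hr2, hA2]
    have e2 : n^2 * (A * (A - t)) ≤ P * (B - t^2) := by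
      have e21 : n^2 * (A * (A - t)) ≤ n^2 * (B - t^2) :=
        mul_le_mul_of_nonneg_left e1 (sq_nonneg n)
      have e22 : n^2 * (B - t^2) ≤ P * (B - t^2) := by
        apply mul_le_mul_of_nonneg_right _ hBt
        have hr3 : n*(n+1) - n^2 = n := by ring
        rw [hPdef]
        linarith
      linarith
    rw [hQeq]
    linarith
  have hQm_lt0 : ∀ t ∈ Set.Icc (0:ℝ) θ, Qlm ℓ m t < 0 := by
    intro t ht
    have h1 := hQm_neg t ht
    have h2 : 0 < n^2 * (A * (A - t)) := by
      have h3 : 0 < A - t := by have := ht.2; linarith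
      positivity
    linarith
  -- difference of the two Q's
  have hQdiff : ∀ t ∈ Set.Icc (0:ℝ) θ, Qlm ℓ m t - Qlm ℓ (m-1) t =
      (2*(m:ℝ) - 1) / Real.cos t ^ 2 := by
    intro t ht
    obtain ⟨hc1, hc2, hc3⟩ := aux_cos ht.1 ht.2 hθ14
    have hc0 : Real.cos t ^ 2 ≠ 0 := by positivity
    simp only [Qlm]
    push_cast
    field_simp
    ring
  have hQdiff_nonneg : ∀ t ∈ Set.Icc (0:ℝ) θ, 0 ≤ Qlm ℓ m t - Qlm ℓ (m-1) t := by
    intro t ht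
    rw [hQdiff t ht]
    obtain ⟨hc1, hc2, hc3⟩ := aux_cos ht.1 ht.2 hθ14
    apply div_nonneg (by linarith) (by positivity)
  have hQdiff_le : ∀ t ∈ Set.Icc (0:ℝ) θ, Qlm ℓ m t - Qlm ℓ (m-1) t ≤ 3 * n := by
    intro t ht
    rw [hQdiff t ht]
    obtain ⟨hc1, hc2, hc3⟩ := aux_cos ht.1 ht.2 hθ14
    rw [div_le_iff₀ (by positivity)]
    have h := mul_le_mul_of_nonneg_left hc2 (show (0:ℝ) ≤ 3*n by linarith)
    linarith
  have hQm1_lt0 : ∀ t ∈ Set.Icc (0:ℝ) θ, Qlm ℓ (m-1) t < 0 := by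
    intro t ht
    have h1 := hQdiff_nonneg t ht
    have h2 := hQm_lt0 t ht
    linarith
  -- continuity/integrability
  have hcont : ∀ k : ℤ, ContinuousOn (fun t => Real.sqrt |Qlm ℓ k t|) (Set.Icc (0:ℝ) θ) := by
    intro k
    apply Real.continuous_sqrt.comp_continuousOn
    apply ContinuousOn.abs
    apply ContinuousOn.sub
    apply ContinuousOn.sub
    · apply ContinuousOn.div continuousOn_const
        ((Real.continuous_cos.pow 2).continuousOn)
      intro t ht
      obtain ⟨_, _, hc3⟩ := aux_cos ht.1 ht.2 hθ14
      positivity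
    · exact continuousOn_const
    · exact continuousOn_const
  have hint : ∀ k : ℤ, IntervalIntegrable (fun t => Real.sqrt |Qlm ℓ k t|)
      MeasureTheory.volume 0 θ := by
    intro k
    apply ContinuousOn.intervalIntegrable
    rw [hIcc]; exact hcont k
  -- the difference of integrals
  have hsub : Slm ℓ (m-1) θ - Slm ℓ m θ =
      ∫ t in (0:ℝ)..θ, (Real.sqrt |Qlm ℓ (m-1) t| - Real.sqrt |Qlm ℓ m t|) := by
    rw [Slm, Slm, ← intervalIntegral.integral_sub (hint (m-1)) (hint m)]
  have habs : ∀ t ∈ Set.Icc (0:ℝ) θ, |Qlm ℓ m t| = -(Qlm ℓ m t) ∧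
      |Qlm ℓ (m-1) t| = -(Qlm ℓ (m-1) t) := by
    intro t ht
    exact ⟨abs_of_neg (hQm_lt0 t ht), abs_of_neg (hQm1_lt0 t ht)⟩
  have hptnonneg : ∀ t ∈ Set.Icc (0:ℝ) θ,
      0 ≤ Real.sqrt |Qlm ℓ (m-1) t| - Real.sqrt |Qlm ℓ m t| := by
    intro t ht
    obtain ⟨h1, h2⟩ := habs t ht
    rw [h1, h2, sub_nonneg]
    apply Real.sqrt_le_sqrt
    have := hQdiff_nonneg t ht
    linarith
  constructor
  · rw [hsub]
    apply intervalIntegral.integral_nonneg hθ0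
    intro t ht
    exact hptnonneg t ht
  -- upper bound
  · rw [hsub]
    have hptle : ∀ t ∈ Set.Icc (0:ℝ) θ,
        Real.sqrt |Qlm ℓ (m-1) t| - Real.sqrt |Qlm ℓ m t| ≤
        3 / Real.sqrt A * (Real.sqrt (A - t))⁻¹ := by
      intro t ht
      obtain ⟨h1, h2⟩ := habs t ht
      rw [h1, h2]
      have hb := hQm_neg t ht
      have hAt : 0 < A - t := by have := ht.2; linarith
      have hbpos : 0 < n^2 * (A * (A - t)) := by positivity
      have hblt : 0 < -(Qlm ℓ m t) := lt_of_lt_of_le hbpos hb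
      have hab : -(Qlm ℓ m t) ≤ -(Qlm ℓ (m-1) t) := by
        have := hQdiff_nonneg t ht; linarith
      have step1 := sqrt_sub_sqrt_le hblt hab
      have hdnum : -(Qlm ℓ (m-1) t) - -(Qlm ℓ m t) ≤ 3 * n := by
        have := hQdiff_le t ht; linarith
      have hdnum0 : 0 ≤ -(Qlm ℓ (m-1) t) - -(Qlm ℓ m t) := by
        have := hQdiff_nonneg t ht; linarith
      have hsqb : n * (Real.sqrt A * Real.sqrt (A - t)) ≤ Real.sqrt (-(Qlm ℓ m t)) := by
        have heq : Real.sqrt (n^2 * (A * (A - t))) =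
            n * (Real.sqrt A * Real.sqrt (A - t)) := by
          rw [Real.sqrt_mul (sq_nonneg n), Real.sqrt_sq hn0.le,
            Real.sqrt_mul hApos.le]
        rw [← heq]
        exact Real.sqrt_le_sqrt hb
      have hsqApos : 0 < Real.sqrt A := Real.sqrt_pos.mpr hApos
      have hsqAtpos : 0 < Real.sqrt (A - t) := Real.sqrt_pos.mpr hAt
      have step2 : (-(Qlm ℓ (m-1) t) - -(Qlm ℓ m t)) / Real.sqrt (-(Qlm ℓ m t)) ≤
          3 * n / (n * (Real.sqrt A * Real.sqrt (A - t))) :=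
        div_le_div₀ (by positivity) hdnum (by positivity) hsqb
      have heq2 : 3 * n / (n * (Real.sqrt A * Real.sqrt (A - t))) =
          3 / Real.sqrt A * (Real.sqrt (A - t))⁻¹ := by
        field_simp
      calc Real.sqrt (-(Qlm ℓ (m-1) t)) - Real.sqrt (-(Qlm ℓ m t))
          ≤ (-(Qlm ℓ (m-1) t) - -(Qlm ℓ m t)) / Real.sqrt (-(Qlm ℓ m t)) := step1
        _ ≤ 3 * n / (n * (Real.sqrt A * Real.sqrt (A - t))) := step2
        _ = 3 / Real.sqrt A * (Real.sqrt (A - t))⁻¹ := heq2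
    have hinth : IntervalIntegrable (fun t => 3 / Real.sqrt A * (Real.sqrt (A - t))⁻¹)
        MeasureTheory.volume 0 θ := by
      apply ContinuousOn.intervalIntegrable
      apply ContinuousOn.mul continuousOn_const
      apply ContinuousOn.inv₀
      · exact (Real.continuous_sqrt.comp (continuous_const.sub continuous_id)).continuousOn
      · intro t ht
        rw [hIcc] at ht
        have h : 0 < A - t := by have := ht.2; linarith
        exact (Real.sqrt_pos.mpr h).ne'
    have hintsub : IntervalIntegrable
        (fun t => Real.sqrt |Qlm ℓ (m-1) t| - Real.sqrt |Qlm ℓ m t|)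
        MeasureTheory.volume 0 θ := (hint (m-1)).sub (hint m)
    have hmono := intervalIntegral.integral_mono_on hθ0 hintsub hinth hptle
    have hvalue : ∫ t in (0:ℝ)..θ, 3 / Real.sqrt A * (Real.sqrt (A - t))⁻¹ =
        3 / Real.sqrt A * (2 * Real.sqrt A - 2 * Real.sqrt (A - θ)) := by
      rw [intervalIntegral.integral_const_mul, integral_inv_sqrt_sub hθ0 hθA]
    have hfinal : 3 / Real.sqrt A * (2 * Real.sqrt A - 2 * Real.sqrt (A - θ)) ≤ 6 * η₂ := by
      have ha : 0 < Real.sqrt A := Real.sqrt_pos.mpr hApos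
      have hb : 0 ≤ Real.sqrt (A - θ) := Real.sqrt_nonneg _
      have ha2 : Real.sqrt A ^ 2 = A := Real.sq_sqrt hApos.le
      have hb2 : Real.sqrt (A - θ) ^ 2 = A - θ := Real.sq_sqrt (by linarith)
      refine aux_final (θ := θ) ha hb hη₂ ?_ ?_
      · rw [ha2, hb2]; ring
      · rw [ha2]; exact hθηA
    calc (∫ t in (0:ℝ)..θ, (Real.sqrt |Qlm ℓ (m-1) t| - Real.sqrt |Qlm ℓ m t|))
        ≤ ∫ t in (0:ℝ)..θ, 3 / Real.sqrt A * (Real.sqrt (A - t))⁻¹ := hmono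
      _ = 3 / Real.sqrt A * (2 * Real.sqrt A - 2 * Real.sqrt (A - θ)) := hvalue
      _ ≤ 6 * η₂ := hfinal
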